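/- Assume Re(ν) > 0 and let ψ: (0,∞) → V be continuous and satisfy the Lewis equation at every x > 0. Define Q_∞(x) = ψ(x) − Σ_{n=1}^∞ (n+x)^{−2ν−1}·η(T'T^{n−1})^{−1}(ψ(1 − 1/(n+x))) for x > 0 (the series converges absolutely since Re(2ν+1) > 1 and ψ is bounded on [1/2,1]). Then Q_∞(x+1) = η(T)·Q_∞(x) for all x > 0. -/

import Mathlib

set_option maxHeartbeats 1000000

open Complex

/-- `SL₂(ℤ)`. -/
abbrev SL2Z := Matrix.SpecialLinearGroup (Fin 2) ℤ

/-- The matrix `T = [[1,1],[0,1]]`. -/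
def Tm : SL2Z := ⟨!![1, 1; 0, 1], by norm_num [Matrix.det_fin_two_of]⟩

/-- The matrix `S = [[0,1],[−1,0]]`. -/
def Sm : SL2Z := ⟨!![0, 1; -1, 0], by norm_num [Matrix.det_fin_two_of]⟩

/-- The matrix `T' = [[1,0],[1,1]]`. -/
def Tm' : SL2Z := ⟨!![1, 0; 1, 1], by norm_num [Matrix.det_fin_two_of]⟩

/-- The matrix `−I`. -/
def negI : SL2Z := ⟨!![-1, 0; 0, -1], by norm_num [Matrix.det_fin_two_of]⟩

/-- `ψ : (0,∞) → V` satisfies the Lewis equation with parameter `ν` at `x`. -/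
def LewisEqR {V : Type*} [NormedAddCommGroup V] [NormedSpace ℂ V]
    (η : SL2Z →* Module.End ℂ V) (ν : ℂ) (ψ : ℝ → V) (x : ℝ) : Prop :=
  η Tm (ψ x) =
    ψ (x + 1) +
      ((((x : ℂ) + 1)) ^ (-2 * ν - 1)) • η (Sm * Tm⁻¹) (ψ (x / (x + 1)))

/- ---------------- auxiliary lemmas ---------------- -/

lemma aux_group (n : ℕ) : Tm * (Tm' * Tm ^ (n + 1))⁻¹ = (Tm' * Tm ^ n)⁻¹ := by group

lemma aux_Tm_inv : Tm⁻¹ = (⟨!![1, -1; 0, 1], by norm_num [Matrix.det_fin_two_of]⟩ : SL2Z) := by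
  symm; apply eq_inv_of_mul_eq_one_left
  ext i j
  fin_cases i <;> fin_cases j <;> rfl

lemma aux_Tm'_inv : Tm'⁻¹ = (⟨!![1, 0; -1, 1], by norm_num [Matrix.det_fin_two_of]⟩ : SL2Z) := by
  symm; apply eq_inv_of_mul_eq_one_left
  ext i j
  fin_cases i <;> fin_cases j <;> rfl

lemma aux_key0 : Tm * Tm'⁻¹ = Sm * Tm⁻¹ := by
  rw [aux_Tm_inv, aux_Tm'_inv]
  ext i j
  fin_cases i <;> fin_cases j <;> rfl

section aux
variable {V : Type*} [NormedAddCommGroup V] [NormedSpace ℂ V] [FiniteDimensional ℂ V]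

lemma eta_period (η : SL2Z →* Module.End ℂ V) (N : ℕ) (hN : 0 < N) (hord : η Tm ^ N = 1)
    (n : ℕ) : η ((Tm' * Tm ^ n)⁻¹) = η ((Tm' * Tm ^ (n % N))⁻¹) := by
  have h1 : η.toHomUnits Tm ^ N = 1 := by
    ext
    simp [Units.val_pow_eq_pow_val, hord]
  have h2 : η.toHomUnits Tm ^ n = η.toHomUnits Tm ^ (n % N) := by
    conv_lhs => rw [← Nat.mod_add_div n N, pow_add, pow_mul, h1, one_pow, mul_one]
  have h3 : η.toHomUnits ((Tm' * Tm ^ n)⁻¹) = η.toHomUnits ((Tm' * Tm ^ (n % N))⁻¹) := by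
    rw [map_inv, map_inv, map_mul, map_mul, map_pow, map_pow, h2]
  calc η ((Tm' * Tm ^ n)⁻¹)
      = ((η.toHomUnits ((Tm' * Tm ^ n)⁻¹) : (Module.End ℂ V)ˣ) : Module.End ℂ V) :=
        (η.coe_toHomUnits _).symm
    _ = _ := by rw [h3, η.coe_toHomUnits]

lemma summable_aux (η : SL2Z →* Module.End ℂ V) (N : ℕ) (hN : 0 < N) (hord : η Tm ^ N = 1)
    (ν : ℂ) (hν : 0 < ν.re) (ψ : ℝ → V) (hψcont : ContinuousOn ψ (Set.Ioi (0 : ℝ)))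
    (x : ℝ) (hx : 0 < x) :
    Summable (fun n : ℕ => ‖(((((n : ℝ) + 1 + x : ℝ) : ℂ)) ^ (-2 * ν - 1)) •
        η ((Tm' * Tm ^ n)⁻¹) (ψ (1 - 1 / ((n : ℝ) + 1 + x)))‖) := by
  set p : ℝ := (-2 * ν - 1).re with hpdef
  have hpre : p = -2 * ν.re - 1 := by
    simp [hpdef, Complex.sub_re, Complex.mul_re]
  have hp : p < -1 := by rw [hpre]; linarith
  have hp0 : p ≤ 0 := by linarith
  -- operator norm bound
  set B : ℕ → V →L[ℂ] V :=
    fun k => LinearMap.toContinuousLinearMap (η ((Tm' * Tm ^ k)⁻¹) : V →ₗ[ℂ] V) with hB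
  set C : ℝ := ∑ k ∈ Finset.range N, ‖B k‖ with hC
  have hC0 : 0 ≤ C := Finset.sum_nonneg fun i _ => norm_nonneg _
  have hA : ∀ (n : ℕ) (v : V), ‖η ((Tm' * Tm ^ n)⁻¹) v‖ ≤ C * ‖v‖ := by
    intro n v
    rw [eta_period η N hN hord n]
    have h1 : η ((Tm' * Tm ^ (n % N))⁻¹) v = B (n % N) v := by
      rw [hB]; rw [LinearMap.coe_toContinuousLinearMap']
    rw [h1]
    calc ‖B (n % N) v‖ ≤ ‖B (n % N)‖ * ‖v‖ := (B (n % N)).le_opNorm v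
      _ ≤ C * ‖v‖ := by
          apply mul_le_mul_of_nonneg_right _ (norm_nonneg v)
          exact Finset.single_le_sum (fun i _ => norm_nonneg (B i))
            (Finset.mem_range.mpr (Nat.mod_lt _ hN))
  -- bound on ψ over the relevant compact set
  have hsub : Set.Icc (x / (1 + x)) 1 ⊆ Set.Ioi (0 : ℝ) := by
    intro y hy
    have : 0 < x / (1 + x) := by positivity
    exact lt_of_lt_of_le this hy.1
  obtain ⟨M₀, hM₀⟩ := (isCompact_Icc : IsCompact (Set.Icc (x / (1 + x)) 1)).exists_bound_of_continuousOn (hψcont.mono hsub)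
  set M : ℝ := max M₀ 0 with hM
  have hM0 : 0 ≤ M := le_max_right _ _
  have hmem : ∀ n : ℕ, (1 - 1 / ((n : ℝ) + 1 + x)) ∈ Set.Icc (x / (1 + x)) 1 := by
    intro n
    have hpos : (0 : ℝ) < (n : ℝ) + 1 + x := by positivity
    constructor
    · have h1 : 1 / ((n : ℝ) + 1 + x) ≤ 1 / (1 + x) := by
        apply one_div_le_one_div_of_le (by positivity)
        have : (0:ℝ) ≤ (n:ℝ) := Nat.cast_nonneg n
        linarith
      have h2 : x / (1 + x) = 1 - 1 / (1 + x) := by field_simp; ring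
      rw [h2]; linarith
    · have : 0 < 1 / ((n : ℝ) + 1 + x) := by positivity
      linarith
  have hψb : ∀ n : ℕ, ‖ψ (1 - 1 / ((n : ℝ) + 1 + x))‖ ≤ M :=
    fun n => le_trans (hM₀ _ (hmem n)) (le_max_left _ _)
  -- majorant
  have hbase : Summable (fun n : ℕ => ((n : ℝ) + 1 + x) ^ p) := by
    have h1 : Summable (fun n : ℕ => ((n : ℝ)) ^ p) := Real.summable_nat_rpow.mpr hp
    have h2 : Summable (fun n : ℕ => (((n + 1 : ℕ) : ℝ)) ^ p) := (summable_nat_add_iff 1).mpr h1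
    apply Summable.of_nonneg_of_le (fun n => Real.rpow_nonneg (by positivity) p) _ h2
    intro n
    apply Real.rpow_le_rpow_of_nonpos (by positivity) _ hp0
    push_cast
    linarith
  apply Summable.of_nonneg_of_le (fun n => norm_nonneg _) _ ((hbase.mul_left (C * M)))
  intro n
  have hpos : (0 : ℝ) < (n : ℝ) + 1 + x := by positivity
  rw [norm_smul]
  have hcn : ‖((((n : ℝ) + 1 + x : ℝ) : ℂ)) ^ (-2 * ν - 1)‖ = ((n : ℝ) + 1 + x) ^ p := by
    rw [Complex.norm_cpow_eq_rpow_re_of_pos hpos]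
  rw [hcn]
  calc ((n : ℝ) + 1 + x) ^ p * ‖η ((Tm' * Tm ^ n)⁻¹) (ψ (1 - 1 / ((n : ℝ) + 1 + x)))‖
      ≤ ((n : ℝ) + 1 + x) ^ p * (C * M) := by
        apply mul_le_mul_of_nonneg_left _ (Real.rpow_nonneg hpos.le p)
        exact le_trans (hA n _) (mul_le_mul_of_nonneg_left (hψb n) hC0)
    _ = C * M * ((n : ℝ) + 1 + x) ^ p := by ring

end aux

/-- If `Re(ν) > 0` and `ψ` is continuous on `(0,∞)` and satisfies the Lewis
equation there, then
`Q_∞(x) = ψ(x) − Σ_{n≥1} (n+x)^{−2ν−1} η(T'Tⁿ⁻¹)⁻¹ ψ(1−1/(n+x))`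
(an absolutely convergent series) satisfies `Q_∞(x+1) = η(T)·Q_∞(x)` for `x > 0`. -/
theorem stmt12 {V : Type*} [NormedAddCommGroup V] [NormedSpace ℂ V]
    [FiniteDimensional ℂ V] [Nontrivial V]
    (η : SL2Z →* Module.End ℂ V) (hη : η negI = 1)
    (N : ℕ) (hN : 0 < N) (hord : η Tm ^ N = 1)
    (ν : ℂ) (hν : 0 < ν.re)
    (ψ : ℝ → V) (hψcont : ContinuousOn ψ (Set.Ioi (0 : ℝ)))
    (hψlewis : ∀ x : ℝ, 0 < x → LewisEqR η ν ψ x)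
    (Qinf : ℝ → V)
    (hQinf : ∀ x : ℝ, 0 < x →
      Qinf x = ψ x -
        ∑' n : ℕ, (((((n : ℝ) + 1 + x : ℝ) : ℂ)) ^ (-2 * ν - 1)) •
          η ((Tm' * Tm ^ n)⁻¹) (ψ (1 - 1 / ((n : ℝ) + 1 + x)))) :
    (∀ x : ℝ, 0 < x →
      Summable (fun n : ℕ => ‖(((((n : ℝ) + 1 + x : ℝ) : ℂ)) ^ (-2 * ν - 1)) •
        η ((Tm' * Tm ^ n)⁻¹) (ψ (1 - 1 / ((n : ℝ) + 1 + x)))‖)) ∧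
    ∀ x : ℝ, 0 < x → Qinf (x + 1) = η Tm (Qinf x) := by
  have hsum : ∀ x : ℝ, 0 < x →
      Summable (fun n : ℕ => ‖(((((n : ℝ) + 1 + x : ℝ) : ℂ)) ^ (-2 * ν - 1)) •
        η ((Tm' * Tm ^ n)⁻¹) (ψ (1 - 1 / ((n : ℝ) + 1 + x)))‖) :=
    fun x hx => summable_aux η N hN hord ν hν ψ hψcont x hx
  refine ⟨hsum, ?_⟩
  intro x hx
  set F : ℝ → ℕ → V := fun y n => (((((n : ℝ) + 1 + y : ℝ) : ℂ)) ^ (-2 * ν - 1)) •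
      η ((Tm' * Tm ^ n)⁻¹) (ψ (1 - 1 / ((n : ℝ) + 1 + y))) with hF
  have hsumF : ∀ y : ℝ, 0 < y → Summable (F y) :=
    fun y hy => (hsum y hy).of_norm
  set L : V →L[ℂ] V := LinearMap.toContinuousLinearMap (η Tm : V →ₗ[ℂ] V) with hL
  have hLapp : ∀ v : V, L v = η Tm v := fun v => by
    rw [hL, LinearMap.coe_toContinuousLinearMap']
  -- apply η Tm to Qinf x
  have key1 : η Tm (Qinf x) = η Tm (ψ x) - ∑' n : ℕ, η Tm (F x n) := by
    rw [hQinf x hx, map_sub]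
    congr 1
    rw [← hLapp, L.map_tsum (hsumF x hx)]
    exact tsum_congr fun n => hLapp _
  -- Lewis equation
  have hlew := hψlewis x hx
  rw [LewisEqR] at hlew
  -- the n-th shifted term
  have keyshift : ∀ n : ℕ, η Tm (F x (n + 1)) = F (x + 1) n := by
    intro n
    have h1 : ((n + 1 : ℕ) : ℝ) + 1 + x = (n : ℝ) + 1 + (x + 1) := by push_cast; ring
    simp only [hF, map_smul, h1]
    congr 1
    have := aux_group n
    rw [← Module.End.mul_apply, ← map_mul, this]
  -- the 0-th term matches the Lewis extra term
  have key0 : η Tm (F x 0) =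
      ((((x : ℂ) + 1)) ^ (-2 * ν - 1)) • η (Sm * Tm⁻¹) (ψ (x / (x + 1))) := by
    have h1 : ((0 : ℕ) : ℝ) + 1 + x = x + 1 := by push_cast; ring
    have h2 : (1 : ℝ) - 1 / (x + 1) = x / (x + 1) := by field_simp; ring
    simp only [hF, map_smul, h1, h2]
    rw [show ((x + 1 : ℝ) : ℂ) = (x : ℂ) + 1 by push_cast; ring]
    congr 1
    rw [← Module.End.mul_apply, ← map_mul, pow_zero, mul_one, aux_key0]
  -- summability of mapped sequence
  have hsumL : Summable (fun n : ℕ => η Tm (F x n)) := by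
    have := (hsumF x hx).map L L.continuous
    simpa [Function.comp_def, hLapp] using this
  have key2 : ∑' n : ℕ, η Tm (F x n) = η Tm (F x 0) + ∑' n : ℕ, F (x + 1) n := by
    rw [hsumL.tsum_eq_zero_add]
    congr 1
    exact tsum_congr keyshift
  rw [hQinf (x + 1) (by linarith), key1, hlew, key2, key0]
  abel
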